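/- arXiv:1802.03834 — 2 statements merged into one kernel-verified Lean document; each statement's English description precedes it below -/
import Mathlib

section
/- Let b, s be integers with 2 ≤ b < s and define G : [0,1] → [0,1] by G(x) = (1/b)(1 − (1−x)^s). Then G has a unique fixed point 𝔭 in the open interval (0,1); the sequence defined by x_0 = 1 and x_{n+1} = G(x_n) is strictly decreasing and converges to 𝔭; and more generally, for every x ∈ (0,1] the iterates G^n(x) converge to 𝔭 as n → ∞. -/
open Filter Topology

/-- STATEMENT 18: for integers `2 ≤ b < s`, the map `G(x) = (1/b)(1 − (1−x)^s)` has a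
unique fixed point `𝔭` in `(0,1)`; the iterates starting at `x₀ = 1` are strictly
decreasing and converge to `𝔭`; and for every `x ∈ (0,1]` the iterates `Gⁿ(x)` converge
to `𝔭`. -/
theorem statement18 (b s : ℕ) (hb : 2 ≤ b) (hbs : b < s)
    (G : ℝ → ℝ) (hG : ∀ x : ℝ, G x = (1 - (1 - x) ^ s) / b) :
    (∃! x : ℝ, x ∈ Set.Ioo (0 : ℝ) 1 ∧ G x = x) ∧
    ∀ frakp : ℝ, frakp ∈ Set.Ioo (0 : ℝ) 1 → G frakp = frakp →
      StrictAnti (fun n : ℕ => G^[n] (1 : ℝ)) ∧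
      Tendsto (fun n : ℕ => G^[n] (1 : ℝ)) atTop (𝓝 frakp) ∧
      ∀ x ∈ Set.Ioc (0 : ℝ) 1, Tendsto (fun n : ℕ => G^[n] x) atTop (𝓝 frakp) := by
  have hbR : (2:ℝ) ≤ (b:ℝ) := by exact_mod_cast hb
  have hb0 : (0:ℝ) < (b:ℝ) := by linarith
  have hbne : (b:ℝ) ≠ 0 := ne_of_gt hb0
  set H : ℝ → ℝ := fun x => ∑ i ∈ Finset.range s, (1 - x) ^ i with hH
  -- key identity
  have hGx : ∀ x : ℝ, G x - x = x * (H x - b) / b := by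
    intro x
    have hgeom := geom_sum_mul (1 - x) s
    rw [hG]
    field_simp
    nlinarith [hgeom]
  -- continuity
  have hHcont : Continuous H := by
    apply continuous_finset_sum
    intro i _
    fun_prop
  have hGcont : Continuous G := by
    have hGe : G = fun x : ℝ => (1 - (1 - x) ^ s) / b := funext hG
    rw [hGe]
    exact (by fun_prop : Continuous fun x : ℝ => (1 - (1 - x) ^ s)).div_const _
  -- strict antitonicity of H on [0,1]
  have hHanti : StrictAntiOn H (Set.Icc (0:ℝ) 1) := by
    intro x hx y hy hxy
    apply Finset.sum_lt_sum
    · intro i _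
      exact pow_le_pow_left₀ (by linarith [hy.2]) (by linarith) i
    · refine ⟨1, Finset.mem_range.mpr (by omega), ?_⟩
      simpa using (by linarith : 1 - y < 1 - x)
  have hH0 : H 0 = s := by simp [hH]
  have hH1 : H 1 = 1 := by
    rw [hH]
    simp only [sub_self]
    rw [Finset.sum_eq_single 0]
    · simp
    · intro i _ hi; exact zero_pow hi
    · intro h; exact absurd (Finset.mem_range.mpr (by omega)) h
  -- existence of fixed point p
  have hsb : (b:ℝ) < (s:ℝ) := by exact_mod_cast hbs
  have hmem : (b:ℝ) ∈ H '' Set.Icc 0 1 := by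
    apply intermediate_value_Icc' (by norm_num : (0:ℝ) ≤ 1) hHcont.continuousOn
    rw [hH0, hH1]
    exact ⟨by linarith, hsb.le⟩
  obtain ⟨p, hpIcc, hpH⟩ := hmem
  have hpIoo : p ∈ Set.Ioo (0:ℝ) 1 := by
    rcases hpIcc with ⟨h0, h1⟩
    constructor
    · rcases lt_or_eq_of_le h0 with h | h
      · exact h
      · exfalso; rw [← h, hH0] at hpH; exact absurd hpH.symm (ne_of_lt hsb)
    · rcases lt_or_eq_of_le h1 with h | h
      · exact h
      · exfalso; rw [h, hH1] at hpH; linarith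
  have hfixp : G p = p := by
    have := hGx p
    rw [hpH] at this
    simp at this
    linarith
  -- uniqueness
  have huniq : ∀ q ∈ Set.Ioo (0:ℝ) 1, G q = q → q = p := by
    intro q hq hfq
    have h1 := hGx q
    rw [hfq, sub_self] at h1
    have h3 : H q = (b:ℝ) := by
      field_simp at h1
      rcases mul_eq_zero.mp (by linarith [h1] : q * (H q - b) = 0) with h | h
      · exact absurd h (ne_of_gt hq.1)
      · linarith
    exact hHanti.injOn ⟨hq.1.le, hq.2.le⟩ ⟨hpIoo.1.le, hpIoo.2.le⟩ (h3.trans hpH.symm)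
  -- sign facts
  have hGlt : ∀ x : ℝ, p < x → x ≤ 1 → G x < x := by
    intro x h1 h2
    have hHx : H x < H p := hHanti ⟨hpIoo.1.le, hpIoo.2.le⟩ ⟨by linarith [hpIoo.1], h2⟩ h1
    rw [hpH] at hHx
    have hx0 : 0 < x := lt_trans hpIoo.1 h1
    have hneg : x * (H x - b) / b < 0 :=
      div_neg_of_neg_of_pos (mul_neg_of_pos_of_neg hx0 (by linarith)) hb0
    have := hGx x
    linarith
  have hGgt : ∀ x : ℝ, 0 < x → x < p → x < G x := by
    intro x h1 h2
    have hHx : H p < H x := hHanti ⟨h1.le, by linarith [hpIoo.2]⟩ ⟨hpIoo.1.le, hpIoo.2.le⟩ h2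
    rw [hpH] at hHx
    have hpos : 0 < x * (H x - b) / b :=
      div_pos (mul_pos h1 (by linarith)) hb0
    have := hGx x
    linarith
  -- strict monotonicity of G
  have hGmono : ∀ x y : ℝ, 0 ≤ x → x < y → y ≤ 1 → G x < G y := by
    intro x y hx hxy hy
    rw [hG, hG]
    have hpow : (1 - y) ^ s < (1 - x) ^ s :=
      pow_lt_pow_left₀ (by linarith) (by linarith) (by omega)
    gcongr
  -- decreasing case
  have dec : ∀ x : ℝ, p < x → x ≤ 1 →
      StrictAnti (fun n : ℕ => G^[n] x) ∧ Tendsto (fun n : ℕ => G^[n] x) atTop (𝓝 p) := by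
    intro x hpx hx1
    have hbound : ∀ n : ℕ, p < G^[n] x ∧ G^[n] x ≤ 1 := by
      intro n
      induction n with
      | zero => exact ⟨hpx, hx1⟩
      | succ n ih =>
        rw [Function.iterate_succ_apply']
        have h1 : p < G (G^[n] x) := by
          have := hGmono p (G^[n] x) hpIoo.1.le ih.1 ih.2
          rwa [hfixp] at this
        exact ⟨h1, by linarith [hGlt _ ih.1 ih.2]⟩
    have hanti : StrictAnti (fun n : ℕ => G^[n] x) := by
      apply strictAnti_nat_of_succ_lt
      intro n
      simp only [Function.iterate_succ_apply']
      exact hGlt _ (hbound n).1 (hbound n).2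
    have hbdd : BddBelow (Set.range fun n : ℕ => G^[n] x) := by
      refine ⟨p, ?_⟩
      rintro y ⟨n, rfl⟩
      exact (hbound n).1.le
    have hconv : Tendsto (fun n : ℕ => G^[n] x) atTop (𝓝 (⨅ n : ℕ, G^[n] x)) :=
      tendsto_atTop_ciInf hanti.antitone hbdd
    set L := ⨅ n : ℕ, G^[n] x with hL
    have hLfix : G L = L := by
      have h1 : Tendsto (fun n : ℕ => G^[n+1] x) atTop (𝓝 L) :=
        hconv.comp (tendsto_add_atTop_nat 1)
      have h2 : Tendsto (fun n : ℕ => G (G^[n] x)) atTop (𝓝 (G L)) :=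
        (hGcont.tendsto L).comp hconv
      have he : (fun n : ℕ => G^[n+1] x) = fun n : ℕ => G (G^[n] x) :=
        funext fun n => Function.iterate_succ_apply' G n x
      rw [he] at h1
      exact tendsto_nhds_unique h2 h1
    have hpl : p ≤ L := le_ciInf fun n => (hbound n).1.le
    have hL1 : L < 1 := by
      have h1 : L ≤ G^[1] x := ciInf_le hbdd 1
      have h2 : G^[1] x < x := by
        simpa using hGlt x hpx hx1
      linarith
    have : L = p := huniq L ⟨lt_of_lt_of_le hpIoo.1 hpl, hL1⟩ hLfix
    rw [← this]
    exact ⟨hanti, hconv⟩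
  -- increasing case
  have inc : ∀ x : ℝ, 0 < x → x < p → Tendsto (fun n : ℕ => G^[n] x) atTop (𝓝 p) := by
    intro x hx0 hxp
    have hbound : ∀ n : ℕ, 0 < G^[n] x ∧ G^[n] x < p := by
      intro n
      induction n with
      | zero => exact ⟨hx0, hxp⟩
      | succ n ih =>
        rw [Function.iterate_succ_apply']
        have h1 : G (G^[n] x) < p := by
          have := hGmono (G^[n] x) p ih.1.le ih.2 hpIoo.2.le
          rwa [hfixp] at this
        exact ⟨lt_trans ih.1 (hGgt _ ih.1 ih.2), h1⟩
    have hmono : Monotone (fun n : ℕ => G^[n] x) := by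
      apply monotone_nat_of_le_succ
      intro n
      simp only [Function.iterate_succ_apply']
      exact (hGgt _ (hbound n).1 (hbound n).2).le
    have hbdd : BddAbove (Set.range fun n : ℕ => G^[n] x) := by
      refine ⟨p, ?_⟩
      rintro y ⟨n, rfl⟩
      exact (hbound n).2.le
    have hconv : Tendsto (fun n : ℕ => G^[n] x) atTop (𝓝 (⨆ n : ℕ, G^[n] x)) :=
      tendsto_atTop_ciSup hmono hbdd
    set L := ⨆ n : ℕ, G^[n] x with hL
    have hLfix : G L = L := by
      have h1 : Tendsto (fun n : ℕ => G^[n+1] x) atTop (𝓝 L) :=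
        hconv.comp (tendsto_add_atTop_nat 1)
      have h2 : Tendsto (fun n : ℕ => G (G^[n] x)) atTop (𝓝 (G L)) :=
        (hGcont.tendsto L).comp hconv
      have he : (fun n : ℕ => G^[n+1] x) = fun n : ℕ => G (G^[n] x) :=
        funext fun n => Function.iterate_succ_apply' G n x
      rw [he] at h1
      exact tendsto_nhds_unique h2 h1
    have hLp : L ≤ p := ciSup_le fun n => (hbound n).2.le
    have hxL : x ≤ L := by
      have := le_ciSup hbdd 0
      simpa using this
    have : L = p := huniq L ⟨lt_of_lt_of_le hx0 hxL, lt_of_le_of_lt hLp hpIoo.2⟩ hLfix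
    rw [← this]
    exact hconv
  -- assemble
  constructor
  · exact ⟨p, ⟨hpIoo, hfixp⟩, fun q ⟨hq1, hq2⟩ => huniq q hq1 hq2⟩
  · intro frakp hfmem hffix
    have hfp : frakp = p := huniq frakp hfmem hffix
    subst hfp
    obtain ⟨h1, h2⟩ := dec 1 hpIoo.2 le_rfl
    refine ⟨h1, h2, ?_⟩
    intro x hx
    rcases lt_trichotomy x frakp with h | h | h
    · exact inc x hx.1 h
    · subst h
      have : ∀ n : ℕ, G^[n] x = x := fun n => Function.iterate_fixed hffix n
      simp only [this]
      exact tendsto_const_nhds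
    · exact (dec x h hx.2).2
end

section
/- Let b, s be integers with 2 ≤ b < s. Define functions φ_n : ℝ → ℝ by φ_0(t) = e^t and φ_{n+1}(t) = (b−1)/b + (1/b)·(φ_n((b/s)t))^s. Then for every t ∈ ℝ the sequence φ_n(t) converges to a finite limit φ_∞(t); the limit satisfies the functional equation φ_∞(t) = (b−1)/b + (1/b)·(φ_∞((b/s)t))^s for all t ∈ ℝ; and lim_{t→−∞} φ_∞(t) = 1 − 𝔭, where 𝔭 is the unique solution in (0,1) of 𝔭 = (1/b)(1 − (1−𝔭)^s). -/
open Filter Topology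

set_option maxHeartbeats 2000000 in
/-- STATEMENT 19: for integers `2 ≤ b < s` and the recursively defined moment generating
functions `φ₀(t) = e^t`, `φ_{n+1}(t) = (b−1)/b + (1/b)(φ_n((b/s)t))^s`, the pointwise limit
`φ_∞` exists, satisfies the fixed-point functional equation, and tends to `1 − 𝔭` as
`t → −∞`, where `𝔭` is the unique solution in `(0,1)` of `𝔭 = (1/b)(1 − (1−𝔭)^s)`. -/
theorem statement19 (b s : ℕ) (hb : 2 ≤ b) (hbs : b < s)
    (φ : ℕ → ℝ → ℝ) (h0 : ∀ t : ℝ, φ 0 t = Real.exp t)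
    (hrec : ∀ (n : ℕ) (t : ℝ),
      φ (n + 1) t = ((b : ℝ) - 1) / b + (1 / b) * (φ n (((b : ℝ) / s) * t)) ^ s)
    (frakp : ℝ) (hmem : frakp ∈ Set.Ioo (0 : ℝ) 1)
    (hfix : frakp = (1 - (1 - frakp) ^ s) / b)
    (huniq : ∀ x ∈ Set.Ioo (0 : ℝ) 1, x = (1 - (1 - x) ^ s) / b → x = frakp) :
    ∃ φinf : ℝ → ℝ,
      (∀ t : ℝ, Tendsto (fun n : ℕ => φ n t) atTop (𝓝 (φinf t))) ∧
      (∀ t : ℝ, φinf t = ((b : ℝ) - 1) / b + (1 / b) * (φinf (((b : ℝ) / s) * t)) ^ s) ∧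
      Tendsto φinf atBot (𝓝 (1 - frakp)) := by
  -- basic numeric facts
  have hb2 : (2:ℝ) ≤ (b:ℝ) := by exact_mod_cast hb
  have hb0 : (0:ℝ) < (b:ℝ) := by linarith
  have hbsR : (b:ℝ) < (s:ℝ) := by exact_mod_cast hbs
  have hs0 : (0:ℝ) < (s:ℝ) := by linarith
  have hsne : (s:ℝ) ≠ 0 := ne_of_gt hs0
  have hbne : (b:ℝ) ≠ 0 := ne_of_gt hb0
  obtain ⟨r, hr_def⟩ : ∃ r : ℝ, r = (b:ℝ) / s := ⟨_, rfl⟩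
  have hr0 : 0 < r := hr_def ▸ div_pos hb0 hs0
  have hr1 : r < 1 := hr_def ▸ (div_lt_one hs0).2 hbsR
  have hrs : (s:ℝ) * r = b := by rw [hr_def]; field_simp
  obtain ⟨F, hF_def⟩ : ∃ F : ℝ → ℝ, F = fun x => ((b:ℝ) - 1) / b + (1 / b) * x ^ s := ⟨_, rfl⟩
  have hrecF : ∀ (n : ℕ) (t : ℝ), φ (n + 1) t = F (φ n (r * t)) := by
    intro n t; simp only [hF_def, hr_def]; exact hrec n t
  have hFmono : ∀ x y : ℝ, 0 ≤ x → x ≤ y → F x ≤ F y := by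
    intro x y hx hxy
    have h1 : x ^ s ≤ y ^ s := pow_le_pow_left₀ hx hxy s
    have h1b : (0:ℝ) < 1 / (b:ℝ) := by positivity
    simp only [hF_def]
    nlinarith
  have hFcont : Continuous F := by
    rw [hF_def]
    exact continuous_const.add (continuous_const.mul (continuous_pow s))
  have hFnonneg : ∀ x : ℝ, 0 ≤ x → 0 ≤ F x := by
    intro x hx
    simp only [hF_def]
    have h1 : (0:ℝ) ≤ x ^ s := by positivity
    have h2 : (0:ℝ) ≤ ((b:ℝ)-1)/b := div_nonneg (by linarith) hb0.le
    have h3 : (0:ℝ) ≤ (1/(b:ℝ)) * x ^ s := by positivity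
    linarith
  -- positivity of φ
  have hpos : ∀ n t, 0 ≤ φ n t := by
    intro n
    induction n with
    | zero => intro t; rw [h0]; positivity
    | succ n ih => intro t; rw [hrecF]; exact hFnonneg _ (ih _)
  -- monotone in t
  have hmono_t : ∀ n, Monotone (φ n) := by
    intro n
    induction n with
    | zero => intro t t' h; rw [h0, h0]; exact Real.exp_le_exp.2 h
    | succ n ih =>
      intro t t' h
      rw [hrecF, hrecF]
      exact hFmono _ _ (hpos _ _) (ih (mul_le_mul_of_nonneg_left h hr0.le))
  -- monotone in n
  have hmono_n : ∀ n t, φ n t ≤ φ (n + 1) t := by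
    intro n
    induction n with
    | zero =>
      intro t
      rw [h0, hrecF 0 t, h0]
      have hkey : Real.exp t ≤ (1 - 1/(b:ℝ)) * Real.exp 0 + (1/(b:ℝ)) * Real.exp ((b:ℝ) * t) := by
        have hw1 : (0:ℝ) ≤ 1 - 1/(b:ℝ) := by
          have : 1/(b:ℝ) ≤ 1/2 := by apply one_div_le_one_div_of_le <;> linarith
          linarith
        have := convexOn_exp.2 (Set.mem_univ (0:ℝ)) (Set.mem_univ ((b:ℝ) * t))
          hw1 (by positivity : (0:ℝ) ≤ 1/(b:ℝ)) (by ring)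
        have harg : (1 - 1/(b:ℝ)) • (0:ℝ) + (1/(b:ℝ)) • ((b:ℝ)*t) = t := by
          rw [smul_eq_mul, smul_eq_mul, mul_zero, zero_add, ← mul_assoc, one_div_mul_cancel hbne, one_mul]
        rw [harg] at this
        simpa using this
      have hp : (Real.exp (r * t)) ^ s = Real.exp ((b:ℝ) * t) := by
        rw [← Real.exp_nat_mul]
        congr 1
        rw [← mul_assoc, hrs]
      simp only [hF_def]
      rw [hp]
      rw [Real.exp_zero] at hkey
      have hbb : (1 - 1/(b:ℝ)) = ((b:ℝ)-1)/b := by field_simp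
      rw [hbb] at hkey
      linarith
    | succ n ih =>
      intro t
      rw [hrecF, hrecF]
      exact hFmono _ _ (hpos _ _) (ih _)
  -- quadratic exp bound
  have hexp_quad : ∀ u : ℝ, 0 ≤ u → u ≤ 1 → Real.exp u ≤ 1 + u + u ^ 2 := by
    intro u hu0 hu1
    have habs : |u| ≤ 1 := by rwa [abs_of_nonneg hu0]
    have h := Real.exp_bound habs (n := 2) (by norm_num)
    have hsum : ∑ m ∈ Finset.range 2, u ^ m / (m.factorial : ℝ) = 1 + u := by
      simp [Finset.sum_range_succ]
    rw [hsum, abs_of_nonneg hu0] at h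
    have h2 := (abs_le.1 h).2
    norm_num at h2
    nlinarith [sq_nonneg u]
  -- supersolution constants
  have h1r : 0 < 1 - r := by linarith
  obtain ⟨C, hC_def⟩ : ∃ C : ℝ, C = 2 * b / (1 - r) := ⟨_, rfl⟩
  have hC0 : 0 < C := by rw [hC_def]; positivity
  have hC1 : 1 ≤ C := by rw [hC_def, le_div_iff₀ h1r]; nlinarith
  have hCb : (b:ℝ) ≤ C := by rw [hC_def, le_div_iff₀ h1r]; nlinarith
  have hCr : C * (1 - r) = 2 * b := by rw [hC_def]; field_simp
  obtain ⟨T, hT_def⟩ : ∃ T : ℝ, T = 1 / (2 * C) := ⟨_, rfl⟩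
  have hT0 : 0 < T := by rw [hT_def]; positivity
  have hT1 : T ≤ 1 := by
    rw [hT_def, div_le_one (by positivity)]; linarith
  have hCT : C * T = 1/2 := by
    rw [hT_def]; field_simp
  -- the local supersolution
  obtain ⟨ψ, hψ_def⟩ : ∃ ψ : ℝ → ℝ, ψ = fun t => if t ≤ 0 then 1 else 1 + t / (1 - C * t) :=
    ⟨_, rfl⟩
  -- key inequality
  have hkeyineq : ∀ t : ℝ, 0 < t → t ≤ T →
      (1 + (r*t) / (1 - C * (r*t))) ^ s ≤ 1 + (b:ℝ) * (t / (1 - C * t)) := by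
    intro t ht0 htT
    have hCt : C * t ≤ 1/2 := by
      have h := mul_le_mul_of_nonneg_left htT hC0.le
      linarith [hCT]
    have hD : (0:ℝ) < 1 - C * t := by linarith
    have hrtt : r * t ≤ t := by
      have h := mul_le_mul_of_nonneg_right hr1.le ht0.le
      linarith
    have hCrt : C * (r * t) ≤ C * t := mul_le_mul_of_nonneg_left hrtt hC0.le
    have hCrt0 : 0 ≤ C * (r * t) := by positivity
    have hE : (0:ℝ) < 1 - C * (r*t) := by linarith
    have hED : 1 - C * t ≤ 1 - C * (r*t) := by linarith
    have hu0 : 0 ≤ (b:ℝ) * t / (1 - C * (r*t)) := by positivity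
    have hu1 : (b:ℝ) * t / (1 - C * (r*t)) ≤ 1 := by
      rw [div_le_one hE]
      have h1 : (b:ℝ)*t ≤ C*t := mul_le_mul_of_nonneg_right hCb ht0.le
      linarith
    have hx0 : 0 ≤ (r*t) / (1 - C * (r*t)) := by positivity
    -- step a
    have hstepa : (1 + (r*t) / (1 - C * (r*t))) ^ s ≤
        Real.exp ((b:ℝ) * t / (1 - C * (r*t))) := by
      have h1 : 1 + (r*t) / (1 - C * (r*t)) ≤ Real.exp ((r*t) / (1 - C * (r*t))) := by
        have := Real.add_one_le_exp ((r*t) / (1 - C * (r*t))); linarith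
      have h2 : (1 + (r*t) / (1 - C * (r*t))) ^ s ≤
          (Real.exp ((r*t) / (1 - C * (r*t)))) ^ s :=
        pow_le_pow_left₀ (by linarith) h1 s
      have h3 : (Real.exp ((r*t) / (1 - C * (r*t)))) ^ s =
          Real.exp ((b:ℝ) * t / (1 - C * (r*t))) := by
        rw [← Real.exp_nat_mul]
        congr 1
        rw [← mul_div_assoc, ← mul_assoc, hrs]
      rw [h3] at h2; exact h2
    -- step c
    have hstepc : Real.exp ((b:ℝ) * t / (1 - C * (r*t))) ≤
        1 + (b:ℝ) * t / (1 - C * (r*t)) + ((b:ℝ) * t / (1 - C * (r*t)))^2 :=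
      hexp_quad _ hu0 hu1
    -- step d
    have hstepd : (b:ℝ) * t / (1 - C * (r*t)) + ((b:ℝ) * t / (1 - C * (r*t)))^2 ≤
        (b:ℝ) * (t / (1 - C * t)) := by
      have hrw : (b:ℝ) * t / (1 - C * (r*t)) + ((b:ℝ) * t / (1 - C * (r*t)))^2 =
          ((b:ℝ)*t*(1 - C*(r*t)) + ((b:ℝ)*t)^2) / (1 - C*(r*t))^2 := by
        field_simp
      have hrw2 : (b:ℝ) * (t / (1 - C * t)) = ((b:ℝ)*t) / (1 - C*t) := by ring
      have halg : ∀ x D E : ℝ, 0 < x → 0 < D → D ≤ E → E - D = 2*x →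
          (x*E + x^2)*D ≤ x*E^2 := by
        intro x D E hx hD hDE hED2
        have hE2 : E = D + 2*x := by linarith
        rw [hE2]
        nlinarith [mul_pos (mul_pos hx hx) hD, mul_pos (mul_pos hx hx) hx]
      rw [hrw, hrw2, div_le_div_iff₀ (by positivity) hD]
      have hdiff : (1 - C*(r*t)) - (1 - C*t) = 2*((b:ℝ)*t) := by
        linear_combination t * hCr
      exact halg ((b:ℝ)*t) _ _ (mul_pos hb0 ht0) hD hED hdiff
    calc (1 + (r*t) / (1 - C * (r*t))) ^ s ≤ Real.exp ((b:ℝ) * t / (1 - C * (r*t))) := hstepa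
      _ ≤ 1 + (b:ℝ) * t / (1 - C * (r*t)) + ((b:ℝ) * t / (1 - C * (r*t)))^2 := hstepc
      _ ≤ 1 + (b:ℝ) * (t / (1 - C * t)) := by linarith
  -- ψ dominates exp on (-∞, T]
  have hψ_exp : ∀ t ≤ T, Real.exp t ≤ ψ t := by
    intro t htT
    by_cases ht : t ≤ 0
    · simp only [hψ_def, if_pos ht]
      exact Real.exp_le_one_iff.2 ht
    · push_neg at ht
      simp only [hψ_def, if_neg (not_le.2 ht)]
      have ht1 : t ≤ 1 := le_trans htT hT1
      have hCt : C * t ≤ 1/2 := by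
        have h := mul_le_mul_of_nonneg_left htT hC0.le
        linarith [hCT]
      have hD : (0:ℝ) < 1 - C * t := by linarith
      have h1 : Real.exp t ≤ 1 + t + t^2 := hexp_quad t ht.le ht1
      have h2 : t + t^2 ≤ t / (1 - C * t) := by
        rw [le_div_iff₀ hD]
        have hCt2 : t^2 ≤ C * t^2 := le_mul_of_one_le_left (sq_nonneg t) hC1
        have hCt3 : (0:ℝ) ≤ C * t^3 := by positivity
        nlinarith [hCt2, hCt3]
      linarith
  -- base bound: φ n t ≤ ψ t for t ≤ T
  have hbase : ∀ n, ∀ t ≤ T, φ n t ≤ ψ t := by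
    intro n
    induction n with
    | zero => intro t htT; rw [h0]; exact hψ_exp t htT
    | succ n ih =>
      intro t htT
      rw [hrecF]
      have hrtT : r * t ≤ T := by
        by_cases ht : t ≤ 0
        · have := mul_nonpos_of_nonneg_of_nonpos hr0.le ht
          linarith
        · push_neg at ht
          have h := mul_le_mul_of_nonneg_right hr1.le ht.le
          linarith
      have h1 : φ n (r*t) ≤ ψ (r*t) := ih _ hrtT
      have h2 : F (φ n (r*t)) ≤ F (ψ (r*t)) := hFmono _ _ (hpos _ _) h1
      refine h2.trans ?_
      by_cases ht : t ≤ 0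
      · have hrt : r * t ≤ 0 := mul_nonpos_of_nonneg_of_nonpos hr0.le ht
        simp only [hψ_def, if_pos hrt, if_pos ht]
        simp only [hF_def, one_pow]
        field_simp
        linarith
      · push_neg at ht
        have hrt : ¬ (r * t ≤ 0) := not_le.2 (by positivity)
        simp only [hψ_def, if_neg hrt, if_neg (not_le.2 ht)]
        have hk := hkeyineq t ht htT
        simp only [hF_def]
        have hb' : (0:ℝ) < 1/(b:ℝ) := by positivity
        have h3 : (1/(b:ℝ)) * (1 + r*t/(1 - C*(r*t)))^s ≤
            (1/(b:ℝ)) * (1 + (b:ℝ) * (t/(1 - C*t))) :=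
          mul_le_mul_of_nonneg_left hk hb'.le
        have hCt : C * t ≤ 1/2 := by
          have h := mul_le_mul_of_nonneg_left htT hC0.le
          linarith [hCT]
        have hD : (0:ℝ) < 1 - C * t := by linarith
        have h4 : ((b:ℝ)-1)/b + (1/(b:ℝ)) * (1 + (b:ℝ) * (t/(1 - C*t))) = 1 + t/(1-C*t) := by
          field_simp
          ring
        linarith
  -- global boundedness
  have hclaim : ∀ k : ℕ, ∀ t : ℝ, r ^ k * t ≤ T → ∃ B, ∀ n, φ n t ≤ B := by
    intro k
    induction k with
    | zero =>
      intro t ht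
      rw [pow_zero, one_mul] at ht
      exact ⟨ψ t, fun n => hbase n t ht⟩
    | succ k ih =>
      intro t ht
      have ht' : r ^ k * (r * t) ≤ T := by
        have h : r ^ k * (r * t) = r ^ (k+1) * t := by ring
        rw [h]; exact ht
      obtain ⟨B', hB'⟩ := ih (r * t) ht'
      refine ⟨max (Real.exp t) (F (max B' 1)), fun n => ?_⟩
      cases n with
      | zero => rw [h0]; exact le_max_left _ _
      | succ n =>
        rw [hrecF]
        have h1 : φ n (r*t) ≤ max B' 1 := (hB' n).trans (le_max_left _ _)
        exact (hFmono _ _ (hpos _ _) h1).trans (le_max_right _ _)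
  have hbdd : ∀ t : ℝ, ∃ B, ∀ n, φ n t ≤ B := by
    intro t
    by_cases ht : t ≤ T
    · exact hclaim 0 t (by simpa using ht)
    · push_neg at ht
      have ht0 : 0 < t := lt_trans hT0 ht
      have htend := tendsto_pow_atTop_nhds_zero_of_lt_one hr0.le hr1
      have h2 : ∀ᶠ k in atTop, r ^ k < T / t :=
        htend.eventually (gt_mem_nhds (by positivity : (0:ℝ) < T/t))
      obtain ⟨k, hk⟩ := h2.exists
      exact hclaim k t (le_of_lt ((lt_div_iff₀ ht0).1 hk))
  have hbddA : ∀ t, BddAbove (Set.range fun n => φ n t) := by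
    intro t
    obtain ⟨B, hB⟩ := hbdd t
    exact ⟨B, by rintro x ⟨n, rfl⟩; exact hB n⟩
  -- the limit function
  obtain ⟨φinf, hφinf_def⟩ : ∃ f : ℝ → ℝ, f = fun t => ⨆ n, φ n t := ⟨_, rfl⟩
  have hφinf_eq : ∀ t, φinf t = ⨆ n, φ n t := fun t => by rw [hφinf_def]
  have hconv : ∀ t, Tendsto (fun n : ℕ => φ n t) atTop (𝓝 (φinf t)) := by
    intro t
    rw [hφinf_eq t]
    exact tendsto_atTop_ciSup (monotone_nat_of_le_succ fun n => hmono_n n t) (hbddA t)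
  -- functional equation
  have hfe : ∀ t, φinf t = F (φinf (r * t)) := by
    intro t
    have h1 : Tendsto (fun n : ℕ => φ (n+1) t) atTop (𝓝 (φinf t)) :=
      (hconv t).comp (tendsto_add_atTop_nat 1)
    have h2 : Tendsto (fun n : ℕ => F (φ n (r * t))) atTop (𝓝 (F (φinf (r*t)))) :=
      (hFcont.tendsto _).comp (hconv (r*t))
    have h3 : (fun n : ℕ => φ (n+1) t) = fun n : ℕ => F (φ n (r*t)) :=
      funext fun n => hrecF n t
    rw [h3] at h1
    exact tendsto_nhds_unique h1 h2
  -- exact iterate formula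
  have hiter : ∀ n t, φ n t = F^[n] (Real.exp (r^n * t)) := by
    intro n
    induction n with
    | zero => intro t; simp [h0]
    | succ n ih =>
      intro t
      rw [hrecF, ih (r*t), Function.iterate_succ_apply']
      congr 2
      ring
  -- constants for the uniform bound at t = -1
  obtain ⟨K, hK_def⟩ : ∃ K : ℝ, K = (b:ℝ) * s / ((s:ℝ) - b) := ⟨_, rfl⟩
  have hsb : (0:ℝ) < (s:ℝ) - b := by linarith
  have hK0 : 0 < K := by rw [hK_def]; positivity
  have hKfix : r * K + b = K := by
    rw [hK_def, hr_def]; field_simp; ring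
  -- bernoulli-type bound
  have hbern : ∀ δ : ℝ, 0 ≤ δ → δ ≤ 1 → (1-δ)^s * (1 + (s:ℝ)*δ) ≤ 1 := by
    intro δ hδ0 hδ1
    have h1 : 1 + (s:ℝ)*δ ≤ (1+δ)^s := one_add_mul_le_pow (by linarith) s
    have h2 : (1-δ)^s * (1 + (s:ℝ)*δ) ≤ (1-δ)^s * (1+δ)^s :=
      mul_le_mul_of_nonneg_left h1 (pow_nonneg (by linarith) s)
    have h3 : (1-δ)^s * (1+δ)^s = (1 - δ^2)^s := by
      rw [← mul_pow]; congr 1; ring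
    have h4 : (1 - δ^2)^s ≤ 1 := pow_le_one₀ (by nlinarith) (by nlinarith)
    calc (1-δ)^s * (1 + (s:ℝ)*δ) ≤ (1-δ)^s * (1+δ)^s := h2
      _ = (1 - δ^2)^s := h3
      _ ≤ 1 := h4
  -- single-step gap estimate
  have hstep : ∀ y : ℝ, 0 ≤ y → y < 1 →
      F y < 1 ∧ 1/(1 - F y) ≤ r * (1/(1-y)) + b := by
    intro y hy0 hy1
    have hδ0 : (0:ℝ) < 1 - y := by linarith
    have hδ1 : 1 - y ≤ 1 := by linarith
    have hys : y ^ s * (1 + (s:ℝ)*(1-y)) ≤ 1 := by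
      have h := hbern (1-y) hδ0.le hδ1
      have hyδ : (1:ℝ) - (1-y) = y := by ring
      rwa [hyδ] at h
    have hsd : (0:ℝ) < 1 + (s:ℝ)*(1-y) := by positivity
    have hgap : 1 - F y = (1 - y^s)/b := by
      simp only [hF_def]; field_simp; ring
    have ha : (s:ℝ)*(1-y)/(1+(s:ℝ)*(1-y)) ≤ 1 - y^s := by
      rw [div_le_iff₀ hsd]
      nlinarith [hys]
    have hglow : (s:ℝ)*(1-y)/((1+(s:ℝ)*(1-y))*b) ≤ 1 - F y := by
      rw [hgap, ← div_div]
      gcongr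
    have hgpos : (0:ℝ) < (s:ℝ)*(1-y)/((1+(s:ℝ)*(1-y))*b) := by positivity
    have hFy1 : F y < 1 := by linarith
    refine ⟨hFy1, ?_⟩
    have h2 : 1/(1 - F y) ≤ 1/((s:ℝ)*(1-y)/((1+(s:ℝ)*(1-y))*b)) :=
      one_div_le_one_div_of_le hgpos hglow
    have h3 : 1/((s:ℝ)*(1-y)/((1+(s:ℝ)*(1-y))*b)) = r * (1/(1-y)) + b := by
      rw [one_div_div, hr_def]
      field_simp
    rw [h3] at h2
    exact h2
  -- uniform bound: φ N (-1) ≤ 1 - 1/(2+K)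
  have hGbound : ∀ N : ℕ, φ N (-1) ≤ 1 - 1/(2+K) := by
    intro N
    rw [hiter]
    have hxpos : (0:ℝ) < r^N := pow_pos hr0 N
    have hx1 : r^N ≤ 1 := pow_le_one₀ hr0.le hr1.le
    have hy0 : Real.exp (r^N * (-1)) ≤ 1 - r^N/2 := by
      rw [show r^N * (-1) = -(r^N) by ring]
      have h1 : Real.exp (-(r^N)) ≤ (1 + r^N)⁻¹ := by
        rw [Real.exp_neg]
        exact inv_anti₀ (by positivity) (by linarith [Real.add_one_le_exp (r^N)])
      have h2 : (1 + r^N)⁻¹ ≤ 1 - r^N/2 := by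
        rw [inv_eq_one_div, div_le_iff₀ (by positivity)]
        have hsq : r^N * r^N ≤ r^N * 1 := mul_le_mul_of_nonneg_left hx1 hxpos.le
        nlinarith [hsq]
      linarith
    have hy0pos : 0 ≤ Real.exp (r^N * (-1)) := (Real.exp_pos _).le
    have hy0lt : Real.exp (r^N * (-1)) < 1 := by linarith
    have hw0 : 1/(1 - Real.exp (r^N * (-1))) ≤ 2/r^N := by
      have h1 : 1/(1 - Real.exp (r^N * (-1))) ≤ 1/(r^N/2) :=
        one_div_le_one_div_of_le (by positivity) (by linarith)
      rwa [one_div_div] at h1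
    -- main induction
    have hmain : ∀ k : ℕ, 0 ≤ F^[k] (Real.exp (r^N * (-1))) ∧
        F^[k] (Real.exp (r^N * (-1))) < 1 ∧
        1/(1 - F^[k] (Real.exp (r^N * (-1)))) ≤
          r^k * (1/(1 - Real.exp (r^N * (-1)))) + K := by
      intro k
      induction k with
      | zero =>
        refine ⟨hy0pos, hy0lt, ?_⟩
        simp only [Function.iterate_zero_apply, pow_zero, one_mul]
        linarith
      | succ k ih =>
        obtain ⟨ih0, ih1, ih2⟩ := ih
        rw [Function.iterate_succ_apply']
        obtain ⟨hs1, hs2⟩ := hstep _ ih0 ih1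
        refine ⟨hFnonneg _ ih0, hs1, ?_⟩
        have h4 : r * (1/(1 - F^[k] (Real.exp (r^N * (-1))))) ≤
            r * (r^k * (1/(1 - Real.exp (r^N * (-1)))) + K) :=
          mul_le_mul_of_nonneg_left ih2 hr0.le
        calc 1/(1 - F (F^[k] (Real.exp (r^N * (-1)))))
            ≤ r * (1/(1 - F^[k] (Real.exp (r^N * (-1))))) + b := hs2
          _ ≤ r * (r^k * (1/(1 - Real.exp (r^N * (-1)))) + K) + b := by linarith
          _ = r^(k+1) * (1/(1 - Real.exp (r^N * (-1)))) + (r * K + b) := by ring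
          _ = r^(k+1) * (1/(1 - Real.exp (r^N * (-1)))) + K := by rw [hKfix]
    obtain ⟨hm0, hm1, hm2⟩ := hmain N
    have h5 : r^N * (1/(1 - Real.exp (r^N * (-1)))) ≤ r^N * (2/r^N) :=
      mul_le_mul_of_nonneg_left hw0 hxpos.le
    have h6 : r^N * (2/r^N) = 2 := by field_simp
    have h7 : 1/(1 - F^[N] (Real.exp (r^N * (-1)))) ≤ 2 + K := by
      rw [h6] at h5; linarith
    have h2K : (0:ℝ) < 2 + K := by linarith
    have h8 : (0:ℝ) < 1 - F^[N] (Real.exp (r^N * (-1))) := by linarith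
    have h9 : 1/(2+K) ≤ 1 - F^[N] (Real.exp (r^N * (-1))) := by
      rw [div_le_iff₀ h2K]
      have h10 : 1 ≤ (1 - F^[N] (Real.exp (r^N * (-1)))) * (2 + K) := by
        have h11 := (div_le_iff₀ h8).1 h7
        linarith [h11]
      linarith
    linarith
  -- lower bound for φinf
  have hφinf_lb : ∀ t, ((b:ℝ)-1)/b ≤ φinf t := by
    intro t
    have h1 : φ 1 t ≤ φinf t := by
      rw [hφinf_eq t]; exact le_ciSup (hbddA t) 1
    have h2 : ((b:ℝ)-1)/b ≤ φ 1 t := by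
      rw [hrecF 0 t]
      simp only [hF_def]
      have h3 : (0:ℝ) ≤ (1/(b:ℝ)) * (φ 0 (r*t))^s := by
        have := hpos 0 (r*t); positivity
      linarith
    linarith
  have hφinf_mono : Monotone φinf := by
    intro t t' h
    rw [hφinf_eq t, hφinf_eq t']
    exact ciSup_le fun n => (hmono_t n h).trans (le_ciSup (hbddA t') n)
  have hbb : BddBelow (Set.range φinf) :=
    ⟨((b:ℝ)-1)/b, by rintro x ⟨t, rfl⟩; exact hφinf_lb t⟩
  have htendsℓ : Tendsto φinf atBot (𝓝 (⨅ t, φinf t)) :=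
    tendsto_atBot_ciInf hφinf_mono hbb
  have hℓ_lb : ((b:ℝ)-1)/b ≤ ⨅ t, φinf t := le_ciInf hφinf_lb
  have hℓ_ub : (⨅ t, φinf t) ≤ 1 - 1/(2+K) := by
    have h1 : (⨅ t, φinf t) ≤ φinf (-1) := ciInf_le hbb (-1)
    have h2 : φinf (-1) ≤ 1 - 1/(2+K) := by
      rw [hφinf_eq]; exact ciSup_le fun n => hGbound n
    linarith
  have hrmap : Tendsto (fun t : ℝ => r * t) atBot atBot :=
    Tendsto.const_mul_atBot hr0 tendsto_id
  have hFℓ : (⨅ t, φinf t) = F (⨅ t, φinf t) := by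
    have h1 : Tendsto (fun t => F (φinf (r * t))) atBot (𝓝 (F (⨅ t, φinf t))) :=
      (hFcont.tendsto _).comp (htendsℓ.comp hrmap)
    have h2 : (fun t => φinf t) = fun t => F (φinf (r*t)) := funext hfe
    exact tendsto_nhds_unique (h2 ▸ htendsℓ) h1
  have h2K : (0:ℝ) < 2 + K := by linarith
  have hℓq : (⨅ t, φinf t) = 1 - frakp := by
    have hi1 : (0:ℝ) < 1/(2+K) := by positivity
    have hi2 : (0:ℝ) < ((b:ℝ)-1)/b := div_pos (by linarith) hb0
    have hmem' : 1 - (⨅ t, φinf t) ∈ Set.Ioo (0:ℝ) 1 :=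
      Set.mem_Ioo.mpr ⟨by linarith, by linarith⟩
    have heq : 1 - (⨅ t, φinf t) = (1 - (1 - (1 - (⨅ t, φinf t)))^s)/b := by
      have h1 : (⨅ t, φinf t) = ((b:ℝ)-1)/b + (1/b)*(⨅ t, φinf t)^s := by
        conv_lhs => rw [hFℓ]
        simp only [hF_def]
      have h2 : (1:ℝ) - (1 - (⨅ t, φinf t)) = (⨅ t, φinf t) := by ring
      rw [h2]
      field_simp at h1 ⊢
      linarith
    have := huniq (1 - (⨅ t, φinf t)) hmem' heq
    linarith
  refine ⟨φinf, hconv, ?_, ?_⟩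
  · intro t
    have h := hfe t
    simp only [hF_def, hr_def] at h
    exact h
  · rw [← hℓq]
    exact htendsℓ
end
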